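/- Let g > 0, h_l > 0, u_l > 0 and [b] > 0 be real numbers. Then: (i) u₀ is strictly decreasing on (0, ∞); (ii) for every h > h_l, the derivative of h ↦ h·u₀(h) satisfies (h·u₀(h))' < c₁(h) and, for h > h̃, c₁(h) < 0, so h ↦ h·u₀(h) is strictly decreasing on (h̃, ∞); (iii) consequently the function r(h) := ((h·u₀(h))²/g)^(1/3) − h + [b] is strictly decreasing on [h̃, h̲], where h̲ is the largest real root of f. -/

import Mathlib

/-- Velocity along the 1-shock curve from `(h_l, u_l)` at depth `h`. -/
noncomputable def uZero (g hl ul h : ℝ) : ℝ :=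
  ul - Real.sqrt ((g / 2) * (1 / h + 1 / hl)) * (h - hl)

/-- Speed of the 1-shock from `(h_l, u_l)` to depth `h`. -/
noncomputable def cOne (g hl ul h : ℝ) : ℝ :=
  ul - Real.sqrt ((g / 2) * (1 / h + 1 / hl)) * h

/-- The cubic `f(h) = h³ − h_l h² − (h_l² + (2/g)u_l²h_l)h + h_l³`. -/
noncomputable def fCubic (g hl ul h : ℝ) : ℝ :=
  h ^ 3 - hl * h ^ 2 - (hl ^ 2 + (2 / g) * ul ^ 2 * hl) * h + hl ^ 3

/-- `h̃ = h_l` if `z ≤ 1` and `h̃ = (h_l/2)(√(1+8z) − 1)` if `z > 1`,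
where `z = u_l²/(gh_l)`. -/
noncomputable def hTilde (g hl ul : ℝ) : ℝ :=
  if ul ^ 2 / (g * hl) ≤ 1 then hl
  else (hl / 2) * (Real.sqrt (1 + 8 * (ul ^ 2 / (g * hl))) - 1)

lemma sqA_pos {g hl h : ℝ} (hg : 0 < g) (hhl : 0 < hl) (hh : 0 < h) :
    0 < (g / 2) * (1 / h + 1 / hl) := by positivity
lemma u0_hasDeriv (g hl ul : ℝ) {h : ℝ} (hg : 0 < g) (hhl : 0 < hl) (hh : 0 < h) :
    HasDerivAt (uZero g hl ul)
      (-((g / 2 * -(h ^ 2)⁻¹) / (2 * Real.sqrt ((g / 2) * (1 / h + 1 / hl))) * (h - hl)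
        + Real.sqrt ((g / 2) * (1 / h + 1 / hl)) * 1)) h := by
  have hA : HasDerivAt (fun y : ℝ => (g / 2) * (1 / y + 1 / hl)) (g / 2 * -(h ^ 2)⁻¹) h := by
    have := ((hasDerivAt_inv (ne_of_gt hh)).add_const (1 / hl)).const_mul (g / 2)
    simpa [one_div] using this
  have hAne : (g / 2) * (1 / h + 1 / hl) ≠ 0 := ne_of_gt (sqA_pos hg hhl hh)
  have hs := hA.sqrt hAne
  have h2 := (hs.mul ((hasDerivAt_id h).sub_const hl)).const_sub ul
  show HasDerivAt (fun x : ℝ => ul - Real.sqrt ((g / 2) * (1 / x + 1 / hl)) * (x - hl)) _ h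
  convert h2 using 1
  all_goals rfl
lemma u0_deriv_neg (g hl ul : ℝ) {h : ℝ} (hg : 0 < g) (hhl : 0 < hl) (hh : 0 < h) :
    deriv (uZero g hl ul) h < 0 := by
  rw [(u0_hasDeriv g hl ul hg hhl hh).deriv]
  set s := Real.sqrt ((g / 2) * (1 / h + 1 / hl)) with hsdef
  have hs : 0 < s := Real.sqrt_pos.2 (sqA_pos hg hhl hh)
  have hs2 : s ^ 2 = (g / 2) * (1 / h + 1 / hl) := Real.sq_sqrt (le_of_lt (sqA_pos hg hhl hh))
  have hs2' : s ^ 2 * (h * hl) = g / 2 * (hl + h) := by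
    rw [hs2]; field_simp
  rw [neg_lt, neg_zero,
    show g / 2 * -(h ^ 2)⁻¹ / (2 * s) * (h - hl) + s * 1
      = (4 * s ^ 2 * h ^ 2 - g * (h - hl)) / (4 * s * h ^ 2) by
        field_simp; ring]
  apply div_pos _ (by positivity)
  nlinarith [hs2', mul_pos hg hh, mul_pos hg hhl, mul_pos hh hhl]
lemma u0_anti (g hl ul : ℝ) (hg : 0 < g) (hhl : 0 < hl) :
    StrictAntiOn (uZero g hl ul) (Set.Ioi 0) := by
  apply strictAntiOn_of_deriv_neg (convex_Ioi 0)
  · exact fun x hx => (u0_hasDeriv g hl ul hg hhl hx).continuousAt.continuousWithinAt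
  · intro x hx
    rw [interior_Ioi] at hx
    exact u0_deriv_neg g hl ul hg hhl hx
lemma q_hasDeriv (g hl ul : ℝ) {h : ℝ} (hg : 0 < g) (hhl : 0 < hl) (hh : 0 < h) :
    HasDerivAt (fun x : ℝ => x * uZero g hl ul x)
      (1 * uZero g hl ul h + h *
        (-((g / 2 * -(h ^ 2)⁻¹) / (2 * Real.sqrt ((g / 2) * (1 / h + 1 / hl))) * (h - hl)
          + Real.sqrt ((g / 2) * (1 / h + 1 / hl)) * 1))) h :=
  (hasDerivAt_id h).mul (u0_hasDeriv g hl ul hg hhl hh)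
lemma q_deriv_lt (g hl ul : ℝ) {h : ℝ} (hg : 0 < g) (hhl : 0 < hl) (hh : hl < h) :
    deriv (fun x : ℝ => x * uZero g hl ul x) h < cOne g hl ul h := by
  have hh0 : 0 < h := hhl.trans hh
  rw [(q_hasDeriv g hl ul hg hhl hh0).deriv]
  set s := Real.sqrt ((g / 2) * (1 / h + 1 / hl)) with hsdef
  have hs : 0 < s := Real.sqrt_pos.2 (sqA_pos hg hhl hh0)
  have hs2 : s ^ 2 = (g / 2) * (1 / h + 1 / hl) := Real.sq_sqrt (le_of_lt (sqA_pos hg hhl hh0))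
  have hs2' : s ^ 2 * (h * hl) = g / 2 * (hl + h) := by
    rw [hs2]; field_simp
  rw [uZero, cOne]
  rw [show (1:ℝ) * (ul - s * (h - hl)) + h *
      (-((g / 2 * -(h ^ 2)⁻¹) / (2 * s) * (h - hl) + s * 1))
      = ul - s * h - (h - hl) * ((4 * s ^ 2 * h - g) / (4 * s * h)) by
        field_simp; ring]
  have hnum : 0 < 4 * s ^ 2 * h - g := by nlinarith [hs2', mul_pos hg hh0, mul_pos hg hhl]
  have : 0 < (h - hl) * ((4 * s ^ 2 * h - g) / (4 * s * h)) := by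
    apply mul_pos (by linarith) (div_pos hnum (by positivity))
  linarith
lemma hl_le_hTilde (g hl ul : ℝ) (hg : 0 < g) (hhl : 0 < hl) :
    hl ≤ hTilde g hl ul := by
  unfold hTilde
  split_ifs with hz
  · exact le_refl hl
  · push_neg at hz
    have h3 : (3:ℝ) < Real.sqrt (1 + 8 * (ul ^ 2 / (g * hl))) := by
      rw [show (3:ℝ) = Real.sqrt 9 by
        rw [show (9:ℝ) = 3 ^ 2 by norm_num, Real.sqrt_sq (by norm_num)]]
      apply Real.sqrt_lt_sqrt (by norm_num)
      linarith
    nlinarith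
lemma quad_pos (g hl ul : ℝ) {h : ℝ} (hg : 0 < g) (hhl : 0 < hl) (hul : 0 < ul)
    (hh : hTilde g hl ul < h) : 2 * ul ^ 2 * hl < g * h ^ 2 + g * hl * h := by
  have hghl : 0 < g * hl := mul_pos hg hhl
  unfold hTilde at hh
  split_ifs at hh with hz
  · have hle : ul ^ 2 ≤ g * hl := by
      rw [div_le_one hghl] at hz; exact hz
    nlinarith [mul_pos (mul_pos hg (sub_pos.2 hh)) (show (0:ℝ) < h + hl by linarith),
      mul_pos (mul_pos hg hhl) (sub_pos.2 hh),
      mul_le_mul_of_nonneg_right hle (le_of_lt hhl)]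
  · push_neg at hz
    have hsl : Real.sqrt (1 + 8 * (ul ^ 2 / (g * hl))) < 2 * h / hl + 1 := by
      have : Real.sqrt (1 + 8 * (ul ^ 2 / (g * hl))) - 1 < 2 * h / hl := by
        rw [lt_div_iff₀ hhl]; linarith
      linarith
    have h1 : (0:ℝ) ≤ 1 + 8 * (ul ^ 2 / (g * hl)) := by positivity
    have h2 : 1 + 8 * (ul ^ 2 / (g * hl)) < (2 * h / hl + 1) ^ 2 := by
      nlinarith [Real.sq_sqrt h1, Real.sqrt_nonneg (1 + 8 * (ul ^ 2 / (g * hl))), hsl]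
    have h4 := mul_lt_mul_of_pos_right h2 (show (0:ℝ) < g * hl * hl ^ 2 by positivity)
    have e1 : (1 + 8 * (ul ^ 2 / (g * hl))) * (g * hl * hl ^ 2)
        = g * hl * hl ^ 2 + 8 * ul ^ 2 * hl ^ 2 := by field_simp
    have e2 : (2 * h / hl + 1) ^ 2 * (g * hl * hl ^ 2)
        = (4 * h ^ 2 + 4 * h * hl + hl ^ 2) * (g * hl) := by field_simp; ring
    have h5 : g * hl * hl ^ 2 + 8 * ul ^ 2 * hl ^ 2
        < (4 * h ^ 2 + 4 * h * hl + hl ^ 2) * (g * hl) := by rw [← e1, ← e2]; exact h4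
    nlinarith [h5, hhl, mul_pos hhl hhl]
lemma cOne_neg (g hl ul : ℝ) {h : ℝ} (hg : 0 < g) (hhl : 0 < hl) (hul : 0 < ul)
    (hh : hTilde g hl ul < h) : cOne g hl ul h < 0 := by
  have hhl' : hl < h := lt_of_le_of_lt (hl_le_hTilde g hl ul hg hhl) hh
  have hh0 : 0 < h := hhl.trans hhl'
  have hq := quad_pos g hl ul hg hhl hul hh
  rw [cOne, sub_neg]
  have e1 : Real.sqrt ((g / 2) * (1 / h + 1 / hl)) * h
      = Real.sqrt ((g / 2) * (1 / h + 1 / hl) * h ^ 2) := by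
    rw [Real.sqrt_mul (le_of_lt (sqA_pos hg hhl hh0)), Real.sqrt_sq (le_of_lt hh0)]
  rw [e1, Real.lt_sqrt (le_of_lt hul),
    show (g / 2) * (1 / h + 1 / hl) * h ^ 2 = (g * h ^ 2 + g * hl * h) / (2 * hl) by
      field_simp; ring,
    lt_div_iff₀ (by positivity : (0:ℝ) < 2 * hl)]
  linarith
noncomputable def qQuad (g hl ul hunder t : ℝ) : ℝ :=
  t ^ 2 + (hunder - hl) * t + (hunder ^ 2 - hl * hunder - (hl ^ 2 + (2 / g) * ul ^ 2 * hl))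
lemma fCubic_cont (g hl ul : ℝ) : Continuous (fCubic g hl ul) := by
  show Continuous fun h : ℝ => h ^ 3 - hl * h ^ 2 - (hl ^ 2 + (2 / g) * ul ^ 2 * hl) * h + hl ^ 3
  fun_prop
lemma qQuad_cont (g hl ul hunder : ℝ) : Continuous (qQuad g hl ul hunder) := by
  show Continuous fun t : ℝ =>
    t ^ 2 + (hunder - hl) * t + (hunder ^ 2 - hl * hunder - (hl ^ 2 + (2 / g) * ul ^ 2 * hl))
  fun_prop
lemma fhl_neg (g hl ul : ℝ) (hg : 0 < g) (hhl : 0 < hl) (hul : 0 < ul) :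
    fCubic g hl ul hl < 0 := by
  have e : fCubic g hl ul hl = -(2 / g * ul ^ 2 * hl ^ 2) := by unfold fCubic; ring
  rw [e]
  have : 0 < 2 / g * ul ^ 2 * hl ^ 2 := by positivity
  linarith
lemma f_factor (g hl ul hunder : ℝ) (hroot : fCubic g hl ul hunder = 0) (t : ℝ) :
    fCubic g hl ul t = (t - hunder) * qQuad g hl ul hunder t := by
  have hroot' : hunder ^ 3 - hl * hunder ^ 2 - (hl ^ 2 + (2 / g) * ul ^ 2 * hl) * hunder
      + hl ^ 3 = 0 := hroot
  show t ^ 3 - hl * t ^ 2 - (hl ^ 2 + (2 / g) * ul ^ 2 * hl) * t + hl ^ 3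
    = (t - hunder) * (t ^ 2 + (hunder - hl) * t
      + (hunder ^ 2 - hl * hunder - (hl ^ 2 + (2 / g) * ul ^ 2 * hl)))
  linear_combination hroot'
lemma hl_lt_hunder (g hl ul hunder : ℝ) (hg : 0 < g) (hhl : 0 < hl) (hul : 0 < ul)
    (hmax : ∀ x : ℝ, fCubic g hl ul x = 0 → x ≤ hunder) : hl < hunder := by
  set C : ℝ := hl ^ 2 + (2 / g) * ul ^ 2 * hl with hC
  have hC0 : 0 < C := by positivity
  set M : ℝ := hl + C + 1 with hM
  have hfM : 0 < fCubic g hl ul M := by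
    show 0 < M ^ 3 - hl * M ^ 2 - C * M + hl ^ 3
    have hM1 : 1 < M := by rw [hM]; linarith
    have hMC : C < M := by rw [hM]; linarith
    have hMhl : hl < M := by rw [hM]; linarith
    nlinarith [mul_pos (hhl.trans hMhl) (sub_pos.2 hMC), pow_pos hhl 3]
  have hsub := intermediate_value_Ioo (le_of_lt (show hl < M by rw [hM]; linarith))
    (fCubic_cont g hl ul).continuousOn
  have h0mem : (0:ℝ) ∈ Set.Ioo (fCubic g hl ul hl) (fCubic g hl ul M) :=
    ⟨fhl_neg g hl ul hg hhl hul, hfM⟩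
  obtain ⟨c, hc, hfc⟩ := hsub h0mem
  exact lt_of_lt_of_le hc.1 (hmax c hfc)
lemma qQuad_hunder_nonneg (g hl ul hunder : ℝ) (hg : 0 < g) (hhl : 0 < hl) (hul : 0 < ul)
    (hroot : fCubic g hl ul hunder = 0)
    (hmax : ∀ x : ℝ, fCubic g hl ul x = 0 → x ≤ hunder) :
    0 ≤ qQuad g hl ul hunder hunder := by
  by_contra hneg
  push_neg at hneg
  have hu0 : 0 < hunder := hhl.trans (hl_lt_hunder g hl ul hunder hg hhl hul hmax)
  set p : ℝ := hunder - hl with hp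
  set q : ℝ := hunder ^ 2 - hl * hunder - (hl ^ 2 + (2 / g) * ul ^ 2 * hl) with hq
  set M : ℝ := hunder + |p| + |q| + 1 with hM
  have hMgt : hunder < M := by
    have := abs_nonneg p; have := abs_nonneg q; rw [hM]; linarith
  have hQM : 0 < qQuad g hl ul hunder M := by
    show 0 < M ^ 2 + p * M + q
    have h1 : |p| + |q| + 1 ≤ M := by rw [hM]; linarith
    have h2 : -(|p| * M) ≤ p * M := by
      nlinarith [neg_abs_le p, le_of_lt (hu0.trans hMgt)]
    have h3 : -|q| ≤ q := neg_abs_le q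
    nlinarith [abs_nonneg p, abs_nonneg q, le_of_lt (hu0.trans hMgt)]
  obtain ⟨b, hb, hQb⟩ := intermediate_value_Ioo (le_of_lt hMgt)
    (qQuad_cont g hl ul hunder).continuousOn (Set.mem_Ioo.2 ⟨hneg, hQM⟩)
  have hfb : fCubic g hl ul b = 0 := by
    rw [f_factor g hl ul hunder hroot b, hQb, mul_zero]
  exact absurd (hmax b hfb) (not_le.2 hb.1)
lemma f_nonpos (g hl ul hunder : ℝ) (hg : 0 < g) (hhl : 0 < hl) (hul : 0 < ul)
    (hroot : fCubic g hl ul hunder = 0)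
    (hmax : ∀ x : ℝ, fCubic g hl ul x = 0 → x ≤ hunder)
    {x : ℝ} (hx1 : hl ≤ x) (hx2 : x ≤ hunder) : fCubic g hl ul x ≤ 0 := by
  by_contra hfx
  push_neg at hfx
  have hxhl : hl < x := by
    rcases eq_or_lt_of_le hx1 with h | h
    · exact absurd hfx (by rw [← h]; exact not_lt.2 (le_of_lt (fhl_neg g hl ul hg hhl hul)))
    · exact h
  have hxhu : x < hunder := by
    rcases eq_or_lt_of_le hx2 with h | h
    · exact absurd hfx (by rw [h, hroot]; exact lt_irrefl 0)
    · exact h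
  have hQx : qQuad g hl ul hunder x < 0 := by
    have := f_factor g hl ul hunder hroot x
    nlinarith
  have hQhl : 0 < qQuad g hl ul hunder hl := by
    have := f_factor g hl ul hunder hroot hl
    have hfl := fhl_neg g hl ul hg hhl hul
    have hlu : hl < hunder := hl_lt_hunder g hl ul hunder hg hhl hul hmax
    nlinarith
  have hQhu : 0 ≤ qQuad g hl ul hunder hunder :=
    qQuad_hunder_nonneg g hl ul hunder hg hhl hul hroot hmax
  -- root a of Q in (hl, x)
  obtain ⟨a, ha, hQa⟩ := intermediate_value_Ioo' (le_of_lt hxhl)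
    (qQuad_cont g hl ul hunder).continuousOn (Set.mem_Ioo.2 ⟨hQx, hQhl⟩)
  -- root b of Q in (x, hunder]
  obtain ⟨b, hb, hQb⟩ := intermediate_value_Ioc (le_of_lt hxhu)
    (qQuad_cont g hl ul hunder).continuousOn (Set.mem_Ioc.2 ⟨hQx, hQhu⟩)
  -- root r1 of f in (0, hl)
  have hf0 : 0 < fCubic g hl ul 0 := by
    show (0:ℝ) < 0 ^ 3 - hl * 0 ^ 2 - (hl ^ 2 + (2 / g) * ul ^ 2 * hl) * 0 + hl ^ 3
    norm_num
    positivity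
  obtain ⟨r1, hr1, hfr1⟩ := intermediate_value_Ioo' (le_of_lt hhl)
    (fCubic_cont g hl ul).continuousOn
    (Set.mem_Ioo.2 ⟨fhl_neg g hl ul hg hhl hul, hf0⟩)
  have hQr1 : qQuad g hl ul hunder r1 = 0 := by
    have hfac := f_factor g hl ul hunder hroot r1
    rw [hfr1] at hfac
    have hne : r1 - hunder ≠ 0 := by
      have : r1 < hunder := hr1.2.trans (hl_lt_hunder g hl ul hunder hg hhl hul hmax)
      intro hc; linarith [sub_eq_zero.1 hc]
    exact (mul_eq_zero.1 hfac.symm).resolve_left hne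
  -- Q has three distinct roots: contradiction
  have hQa' : a ^ 2 + (hunder - hl) * a
      + (hunder ^ 2 - hl * hunder - (hl ^ 2 + (2 / g) * ul ^ 2 * hl)) = 0 := hQa
  have hQb' : b ^ 2 + (hunder - hl) * b
      + (hunder ^ 2 - hl * hunder - (hl ^ 2 + (2 / g) * ul ^ 2 * hl)) = 0 := hQb
  have hQr1' : r1 ^ 2 + (hunder - hl) * r1
      + (hunder ^ 2 - hl * hunder - (hl ^ 2 + (2 / g) * ul ^ 2 * hl)) = 0 := hQr1
  have e1 : (a - r1) * (a + r1 + (hunder - hl)) = 0 := by linear_combination hQa' - hQr1'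
  have e2 : (b - r1) * (b + r1 + (hunder - hl)) = 0 := by linear_combination hQb' - hQr1'
  have har1 : a - r1 ≠ 0 := by have := hr1.2; have := ha.1; intro hc; nlinarith [sub_eq_zero.1 hc]
  have hbr1 : b - r1 ≠ 0 := by
    have := hr1.2; have := hb.1; intro hc; nlinarith [sub_eq_zero.1 hc]
  have f1 := (mul_eq_zero.1 e1).resolve_left har1
  have f2 := (mul_eq_zero.1 e2).resolve_left hbr1
  have : a = b := by linarith
  linarith [ha.2, hb.1, this]
lemma u0_nonneg (g hl ul : ℝ) {h : ℝ} (hg : 0 < g) (hhl : 0 < hl) (hul : 0 < ul)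
    (hx1 : hl ≤ h) (hf : fCubic g hl ul h ≤ 0) : 0 ≤ uZero g hl ul h := by
  have hh0 : 0 < h := lt_of_lt_of_le hhl hx1
  have hf' : h ^ 3 - hl * h ^ 2 - (hl ^ 2 + (2 / g) * ul ^ 2 * hl) * h + hl ^ 3 ≤ 0 := hf
  have hfg := mul_le_mul_of_nonneg_left hf' (le_of_lt hg)
  have he2 : g * (2 / g) * ul ^ 2 * hl * h = 2 * ul ^ 2 * hl * h := by
    rw [show g * (2 / g) = 2 by field_simp]
  have key0 : g * (h + hl) * (h - hl) ^ 2 ≤ 2 * ul ^ 2 * hl * h := by nlinarith [hfg, he2]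
  have key : (g / 2) * (1 / h + 1 / hl) * (h - hl) ^ 2 ≤ ul ^ 2 := by
    rw [show (g / 2) * (1 / h + 1 / hl) * (h - hl) ^ 2
        = (g * (h + hl) * (h - hl) ^ 2) / (2 * h * hl) by field_simp; ring,
      div_le_iff₀ (by positivity)]
    nlinarith [key0]
  have hchain : Real.sqrt ((g / 2) * (1 / h + 1 / hl)) * (h - hl) ≤ ul := by
    calc Real.sqrt ((g / 2) * (1 / h + 1 / hl)) * (h - hl)
        = Real.sqrt ((g / 2) * (1 / h + 1 / hl) * (h - hl) ^ 2) := by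
          rw [Real.sqrt_mul (le_of_lt (sqA_pos hg hhl hh0)),
            Real.sqrt_sq (by linarith : (0:ℝ) ≤ h - hl)]
      _ ≤ Real.sqrt (ul ^ 2) := Real.sqrt_le_sqrt key
      _ = ul := Real.sqrt_sq (le_of_lt hul)
  unfold uZero
  linarith
lemma q_anti_Ici (g hl ul : ℝ) (hg : 0 < g) (hhl : 0 < hl) (hul : 0 < ul) :
    StrictAntiOn (fun h : ℝ => h * uZero g hl ul h) (Set.Ici (hTilde g hl ul)) := by
  have hT : hl ≤ hTilde g hl ul := hl_le_hTilde g hl ul hg hhl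
  apply strictAntiOn_of_deriv_neg (convex_Ici _)
  · intro x hx
    have hx0 : 0 < x := lt_of_lt_of_le hhl (hT.trans hx)
    exact (q_hasDeriv g hl ul hg hhl hx0).continuousAt.continuousWithinAt
  · intro x hx
    rw [interior_Ici] at hx
    have hxl : hl < x := lt_of_le_of_lt hT hx
    exact lt_trans (q_deriv_lt g hl ul hg hhl hxl) (cOne_neg g hl ul hg hhl hul hx)

/-- (i) `u₀` is strictly decreasing on `(0,∞)`; (ii) for `h > h_l` the derivative
of `h ↦ hu₀(h)` is `< c₁(h)` and, for `h > h̃`, `c₁(h) < 0`, so `h ↦ hu₀(h)` is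
strictly decreasing on `(h̃,∞)`; (iii) consequently
`r(h) = ((hu₀(h))²/g)^(1/3) − h + [b]` is strictly decreasing on `[h̃, h̲]`. -/
theorem stmt_19 (g hl ul b hunder : ℝ) (hg : 0 < g) (hhl : 0 < hl) (hul : 0 < ul)
    (hb : 0 < b)
    (hroot : fCubic g hl ul hunder = 0)
    (hmax : ∀ x : ℝ, fCubic g hl ul x = 0 → x ≤ hunder) :
    StrictAntiOn (uZero g hl ul) (Set.Ioi 0) ∧
    (∀ h : ℝ, hl < h → deriv (fun x : ℝ => x * uZero g hl ul x) h < cOne g hl ul h) ∧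
    (∀ h : ℝ, hTilde g hl ul < h → cOne g hl ul h < 0) ∧
    StrictAntiOn (fun h : ℝ => h * uZero g hl ul h) (Set.Ioi (hTilde g hl ul)) ∧
    StrictAntiOn
      (fun h : ℝ => ((h * uZero g hl ul h) ^ 2 / g) ^ ((1 : ℝ) / 3) - h + b)
      (Set.Icc (hTilde g hl ul) hunder) := by
  have hT : hl ≤ hTilde g hl ul := hl_le_hTilde g hl ul hg hhl
  refine ⟨u0_anti g hl ul hg hhl, fun h hh => q_deriv_lt g hl ul hg hhl hh,
    fun h hh => cOne_neg g hl ul hg hhl hul hh,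
    (q_anti_Ici g hl ul hg hhl hul).mono Set.Ioi_subset_Ici_self, ?_⟩
  intro x hx y hy hxy
  have hxI : x ∈ Set.Ici (hTilde g hl ul) := hx.1
  have hyI : y ∈ Set.Ici (hTilde g hl ul) := hy.1
  have hqlt : y * uZero g hl ul y < x * uZero g hl ul x :=
    q_anti_Ici g hl ul hg hhl hul hxI hyI hxy
  have hyl : hl ≤ y := hT.trans hy.1
  have hy0 : 0 < y := lt_of_lt_of_le hhl hyl
  have hqy0 : 0 ≤ y * uZero g hl ul y :=
    mul_nonneg (le_of_lt hy0)
      (u0_nonneg g hl ul hg hhl hul hyl (f_nonpos g hl ul hunder hg hhl hul hroot hmax hyl hy.2))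
  have hsq : (y * uZero g hl ul y) ^ 2 ≤ (x * uZero g hl ul x) ^ 2 :=
    pow_le_pow_left₀ hqy0 (le_of_lt hqlt) 2
  have hr : ((y * uZero g hl ul y) ^ 2 / g) ^ ((1 : ℝ) / 3)
      ≤ ((x * uZero g hl ul x) ^ 2 / g) ^ ((1 : ℝ) / 3) := by
    gcongr
  simp only []
  linarith
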